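/- Let α > 1, β > 0, p > 0, and 0 < r_0 < q ≤ p. Then for every γ > 0, e^{γ r_0^{2α}/β²} · ∫_{β² q^{−2α}}^{β² r_0^{−2α}} e^{−γ/g} · (1/(α β² p²)) · (g/β²)^{−1−1/α} dg ≤ β² r_0^{2−2α}/(α γ p²). -/

import Mathlib

set_option maxHeartbeats 1000000


open Real

/-- For `α > 1`, `β > 0`, `p > 0`, `0 < r₀ < q ≤ p` and `γ > 0`:
`e^{γ r₀^{2α}/β²} · ∫_{β² q^{-2α}}^{β² r₀^{-2α}} e^{-γ/g} (1/(αβ²p²)) (g/β²)^{-1-1/α} dg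
  ≤ β² r₀^{2-2α}/(α γ p²)`. -/
theorem stmt6 (α β p r₀ q γ : ℝ)
    (hα : 1 < α) (hβ : 0 < β) (hp : 0 < p)
    (hr₀ : 0 < r₀) (hr₀q : r₀ < q) (hqp : q ≤ p) (hγ : 0 < γ) :
    Real.exp (γ * r₀ ^ (2 * α) / β ^ 2) *
      ∫ g in (β ^ 2 * q ^ (-(2 * α)))..(β ^ 2 * r₀ ^ (-(2 * α))),
        Real.exp (-γ / g) * (1 / (α * β ^ 2 * p ^ 2)) * (g / β ^ 2) ^ (-1 - 1 / α)
      ≤ β ^ 2 * r₀ ^ (2 - 2 * α) / (α * γ * p ^ 2) := by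
  have hα0 : (0:ℝ) < α := lt_trans one_pos hα
  have hq : 0 < q := lt_trans hr₀ hr₀q
  set a := β ^ 2 * q ^ (-(2 * α)) with ha_def
  set b := β ^ 2 * r₀ ^ (-(2 * α)) with hb_def
  have hβ2 : (0:ℝ) < β ^ 2 := by positivity
  have ha : 0 < a := by positivity
  have hb : 0 < b := by positivity
  have hab : a ≤ b := by
    apply mul_le_mul_of_nonneg_left _ (le_of_lt hβ2)
    rw [Real.rpow_neg hq.le, Real.rpow_neg hr₀.le]
    apply inv_anti₀ (by positivity)
    exact Real.rpow_le_rpow hr₀.le hr₀q.le (by positivity)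
  have hgb : γ / b = γ * r₀ ^ (2 * α) / β ^ 2 := by
    rw [hb_def, Real.rpow_neg hr₀.le]
    have h1 : r₀ ^ (2 * α) ≠ 0 := by positivity
    field_simp
  set C := β ^ 2 * r₀ ^ (2 - 2 * α) / (α * p ^ 2) with hC_def
  have hC : 0 < C := by positivity
  -- pointwise bound on [a, b]
  have hpt : ∀ g ∈ Set.Icc a b,
      Real.exp (-γ / g) * (1 / (α * β ^ 2 * p ^ 2)) * (g / β ^ 2) ^ (-1 - 1 / α)
        ≤ C * (Real.exp (-γ / g) / g ^ 2) := by
    intro g hg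
    obtain ⟨hag, hgb'⟩ := hg
    have hg0 : 0 < g := lt_of_lt_of_le ha hag
    have hbase : 0 < g / β ^ 2 := by positivity
    have hsplit : (g / β ^ 2) ^ (-1 - 1 / α)
        = (g / β ^ 2) ^ (-(2:ℝ)) * (g / β ^ 2) ^ (1 - 1 / α) := by
      rw [← Real.rpow_add hbase]; ring_nf
    have h2 : (g / β ^ 2) ^ (-(2:ℝ)) = β ^ 4 / g ^ 2 := by
      rw [Real.rpow_neg hbase.le]
      rw [show ((2:ℝ)) = ((2:ℕ):ℝ) by norm_num, Real.rpow_natCast]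
      field_simp
    have hexp_pos : (0:ℝ) ≤ 1 - 1 / α := by
      have : 1 / α < 1 := by
        rw [div_lt_one hα0]; exact hα
      linarith
    have h3 : (g / β ^ 2) ^ (1 - 1 / α) ≤ r₀ ^ (2 - 2 * α) := by
      have hbb : b / β ^ 2 = r₀ ^ (-(2 * α)) := by
        rw [hb_def]; field_simp
      have h4 : (g / β ^ 2) ^ (1 - 1 / α) ≤ (b / β ^ 2) ^ (1 - 1 / α) :=
        Real.rpow_le_rpow hbase.le (div_le_div_of_nonneg_right hgb' hβ2.le) hexp_pos
      calc (g / β ^ 2) ^ (1 - 1 / α) ≤ (b / β ^ 2) ^ (1 - 1 / α) := h4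
        _ = r₀ ^ (-(2 * α) * (1 - 1 / α)) := by
            rw [hbb, ← Real.rpow_mul hr₀.le]
        _ = r₀ ^ (2 - 2 * α) := by
            congr 1
            field_simp
            ring
    calc Real.exp (-γ / g) * (1 / (α * β ^ 2 * p ^ 2)) * (g / β ^ 2) ^ (-1 - 1 / α)
        = Real.exp (-γ / g) * (1 / (α * β ^ 2 * p ^ 2)) *
            ((g / β ^ 2) ^ (-(2:ℝ)) * (g / β ^ 2) ^ (1 - 1 / α)) := by rw [hsplit]
      _ = (Real.exp (-γ / g) / (α * β ^ 2 * p ^ 2) * (β ^ 4 / g ^ 2)) *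
            (g / β ^ 2) ^ (1 - 1 / α) := by rw [h2]; ring
      _ ≤ (Real.exp (-γ / g) / (α * β ^ 2 * p ^ 2) * (β ^ 4 / g ^ 2)) *
            r₀ ^ (2 - 2 * α) := by
          apply mul_le_mul_of_nonneg_left h3
          positivity
      _ = C * (Real.exp (-γ / g) / g ^ 2) := by
          rw [hC_def]
          field_simp
  -- integrability
  have hcont1 : ContinuousOn (fun g =>
      Real.exp (-γ / g) * (1 / (α * β ^ 2 * p ^ 2)) * (g / β ^ 2) ^ (-1 - 1 / α))
      (Set.uIcc a b) := by
    rw [Set.uIcc_of_le hab]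
    have hne : ∀ x ∈ Set.Icc a b, x ≠ 0 := fun x hx => (lt_of_lt_of_le ha hx.1).ne'
    apply ContinuousOn.mul
    · apply ContinuousOn.mul
      · exact ((continuousOn_const.div continuousOn_id hne).rexp)
      · exact continuousOn_const
    · apply ContinuousOn.rpow_const
      · exact continuousOn_id.div_const _
      · intro x hx
        left
        have := (lt_of_lt_of_le ha hx.1)
        positivity
  have hcont2 : ContinuousOn (fun g => C * (Real.exp (-γ / g) / g ^ 2))
      (Set.uIcc a b) := by
    rw [Set.uIcc_of_le hab]
    have hne : ∀ x ∈ Set.Icc a b, x ≠ 0 := fun x hx => (lt_of_lt_of_le ha hx.1).ne'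
    apply ContinuousOn.mul continuousOn_const
    apply ContinuousOn.div
    · exact (continuousOn_const.div continuousOn_id hne).rexp
    · exact (continuousOn_id.pow 2)
    · intro x hx
      exact pow_ne_zero 2 (hne x hx)
  have hint1 : IntervalIntegrable (fun g =>
      Real.exp (-γ / g) * (1 / (α * β ^ 2 * p ^ 2)) * (g / β ^ 2) ^ (-1 - 1 / α))
      MeasureTheory.volume a b := hcont1.intervalIntegrable
  have hint2 : IntervalIntegrable (fun g => C * (Real.exp (-γ / g) / g ^ 2))
      MeasureTheory.volume a b := hcont2.intervalIntegrable
  -- FTC computation of the majorant integral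
  have hftc : ∫ g in a..b, C * (Real.exp (-γ / g) / g ^ 2)
      = (C / γ) * Real.exp (-γ / b) - (C / γ) * Real.exp (-γ / a) := by
    have hderiv : ∀ t ∈ Set.uIcc a b,
        HasDerivAt (fun x => (C / γ) * Real.exp (-γ / x))
          (C * (Real.exp (-γ / t) / t ^ 2)) t := by
      intro t ht
      rw [Set.uIcc_of_le hab] at ht
      have ht0 : 0 < t := lt_of_lt_of_le ha ht.1
      have h1 : HasDerivAt (fun x : ℝ => -γ / x) (γ / t ^ 2) t := by
        have h0 := (hasDerivAt_inv ht0.ne').const_mul (-γ)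
        have heq : (fun x : ℝ => -γ * x⁻¹) = fun x : ℝ => -γ / x := by
          funext x; ring
        rw [heq] at h0
        rw [show γ / t ^ 2 = -γ * -(t ^ 2)⁻¹ by ring]
        exact h0
      have h2 := (h1.exp).const_mul (C / γ)
      have hγ0 : γ ≠ 0 := hγ.ne'
      rw [show C * (Real.exp (-γ / t) / t ^ 2)
          = (C / γ) * (Real.exp (-γ / t) * (γ / t ^ 2)) by field_simp]
      exact h2
    rw [intervalIntegral.integral_eq_sub_of_hasDerivAt hderiv hint2]
  -- combine
  have hmono := intervalIntegral.integral_mono_on hab hint1 hint2 hpt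
  rw [hftc] at hmono
  have hLHS : Real.exp (γ * r₀ ^ (2 * α) / β ^ 2) *
      ∫ g in a..b, Real.exp (-γ / g) * (1 / (α * β ^ 2 * p ^ 2)) * (g / β ^ 2) ^ (-1 - 1 / α)
      ≤ Real.exp (γ / b) * ((C / γ) * Real.exp (-γ / b) - (C / γ) * Real.exp (-γ / a)) := by
    rw [← hgb]
    exact mul_le_mul_of_nonneg_left hmono (Real.exp_pos _).le
  apply le_trans hLHS
  have hsub : Real.exp (γ / b) * ((C / γ) * Real.exp (-γ / b) - (C / γ) * Real.exp (-γ / a))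
      ≤ Real.exp (γ / b) * ((C / γ) * Real.exp (-γ / b)) := by
    apply mul_le_mul_of_nonneg_left _ (Real.exp_pos _).le
    have : 0 ≤ (C / γ) * Real.exp (-γ / a) := by positivity
    linarith
  apply le_trans hsub
  have heq : Real.exp (γ / b) * ((C / γ) * Real.exp (-γ / b)) = C / γ := by
    rw [show Real.exp (γ / b) * ((C / γ) * Real.exp (-γ / b))
        = (Real.exp (γ / b) * Real.exp (-γ / b)) * (C / γ) by ring,
      ← Real.exp_add]
    rw [show γ / b + -γ / b = 0 by ring, Real.exp_zero, one_mul]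
  rw [heq, hC_def]
  apply le_of_eq
  field_simp
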